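/- On a 5-manifold with a one-parameter family of coframes (η⁰(t), η¹(t), η²(t), η³(t)) on a 4-manifold M, if the structure equations dη⁰ = −2η²∧η³, dη³∧η¹ᵇ = 3η⁰∧η¹∧η², dη¹∧η² = −3η⁰∧η³∧η¹ hold at t = t₀ and the evolution equations ∂ₜη⁰ = 2η¹, ∂ₜ(η²∧η³) = −dη¹, ∂ₜ(η³∧η¹) = 3η⁰∧η³ − dη², ∂ₜ(η¹∧η²) = −3η⁰∧η² − dη³ hold for all t, then the structure equations hold for all t. -/

import Mathlib

open Set

lemma const_zero_of_deriv_zero {E : Type*} [NormedAddCommGroup E] [NormedSpace ℝ E]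
    {f : ℝ → E} {a b t₀ : ℝ} (h : ∀ t ∈ Ioo a b, HasDerivAt f 0 t)
    (ht₀ : t₀ ∈ Ioo a b) (h0 : f t₀ = 0) : ∀ t ∈ Ioo a b, f t = 0 := by
  intro t ht
  have key := (convex_Ioo a b).norm_image_sub_le_of_norm_hasFDerivWithin_le
    (f' := fun _ => (0 : ℝ →L[ℝ] E)) (C := 0)
    (fun x hx => ((h x hx).hasFDerivAt.hasFDerivWithinAt).congr_fderiv
      (by ext; simp))
    (fun x _ => by simp) ht₀ ht
  have h1 : ‖f t - f t₀‖ ≤ 0 := by simpa using key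
  have h2 := norm_le_zero_iff.mp h1
  rw [sub_eq_zero] at h2
  rw [h2, h0]


/-- Proposition 3.2 ("if" direction, preservation of the structure equations).
Here `Ω1`, `Ω2`, `Ω3` play the rôle of the spaces of 1-, 2- and 3-forms on the
4-manifold `M`, `w11 : Ω1 × Ω1 → Ω2` and `w12 : Ω1 × Ω2 → Ω3` are the wedge
products, and `d1`, `d2` the exterior derivatives, satisfying the usual
identities: antisymmetry of the wedge of 1-forms, `η ∧ η ∧ ω`-type vanishing,
the Leibniz rule `d(a ∧ b) = b ∧ da − a ∧ db` (for 1-forms `a, b`, using that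
2-forms commute with 1-forms) and `d ∘ d = 0`.  If the one-parameter family of
coframes `(η⁰(t), η¹(t), η²(t), η³(t))` satisfies the structure equations
`dη⁰ = −2η²∧η³`, `d(η³∧η¹) = 3η⁰∧η¹∧η²`, `d(η¹∧η²) = −3η⁰∧η³∧η¹` at `t = t₀`
and the evolution equations `∂ₜη⁰ = 2η¹`, `∂ₜ(η²∧η³) = −dη¹`,
`∂ₜ(η³∧η¹) = 3η⁰∧η³ − dη²`, `∂ₜ(η¹∧η²) = −3η⁰∧η² − dη³` for all `t`, then the
structure equations hold for all `t`. -/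
theorem stmt_7 {Ω1 Ω2 Ω3 : Type*}
    [NormedAddCommGroup Ω1] [NormedSpace ℝ Ω1]
    [NormedAddCommGroup Ω2] [NormedSpace ℝ Ω2]
    [NormedAddCommGroup Ω3] [NormedSpace ℝ Ω3]
    (w11 : Ω1 →L[ℝ] Ω1 →L[ℝ] Ω2) (w12 : Ω1 →L[ℝ] Ω2 →L[ℝ] Ω3)
    (d1 : Ω1 →L[ℝ] Ω2) (d2 : Ω2 →L[ℝ] Ω3)
    (hanti : ∀ a b : Ω1, w11 a b = - w11 b a)
    (halt : ∀ a b : Ω1, w12 a (w11 a b) = 0)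
    (hleib : ∀ a b : Ω1, d2 (w11 a b) = w12 b (d1 a) - w12 a (d1 b))
    (hdd : ∀ a : Ω1, d2 (d1 a) = 0)
    (tlo thi t₀ : ℝ) (ht₀ : t₀ ∈ Ioo tlo thi)
    (η0 η1 η2 η3 : ℝ → Ω1)
    (hev0 : ∀ t ∈ Ioo tlo thi, HasDerivAt η0 ((2 : ℝ) • η1 t) t)
    (hev23 : ∀ t ∈ Ioo tlo thi,
      HasDerivAt (fun s => w11 (η2 s) (η3 s)) (-(d1 (η1 t))) t)
    (hev31 : ∀ t ∈ Ioo tlo thi,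
      HasDerivAt (fun s => w11 (η3 s) (η1 s))
        ((3 : ℝ) • w11 (η0 t) (η3 t) - d1 (η2 t)) t)
    (hev12 : ∀ t ∈ Ioo tlo thi,
      HasDerivAt (fun s => w11 (η1 s) (η2 s))
        (-(3 : ℝ) • w11 (η0 t) (η2 t) - d1 (η3 t)) t)
    (hstr0 : d1 (η0 t₀) = (-2 : ℝ) • w11 (η2 t₀) (η3 t₀))
    (hstr31 : d2 (w11 (η3 t₀) (η1 t₀))
      = (3 : ℝ) • w12 (η0 t₀) (w11 (η1 t₀) (η2 t₀)))
    (hstr12 : d2 (w11 (η1 t₀) (η2 t₀))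
      = (-3 : ℝ) • w12 (η0 t₀) (w11 (η3 t₀) (η1 t₀))) :
    ∀ t ∈ Ioo tlo thi,
      d1 (η0 t) = (-2 : ℝ) • w11 (η2 t) (η3 t) ∧
      d2 (w11 (η3 t) (η1 t)) = (3 : ℝ) • w12 (η0 t) (w11 (η1 t) (η2 t)) ∧
      d2 (w11 (η1 t) (η2 t)) = (-3 : ℝ) • w12 (η0 t) (w11 (η3 t) (η1 t)) := by
  -- Step 1: F(t) := dη⁰ + 2 η²∧η³ is constant, hence zero.
  have hF : ∀ t ∈ Ioo tlo thi,
      (fun s => d1 (η0 s) + (2 : ℝ) • w11 (η2 s) (η3 s)) t = 0 := by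
    apply const_zero_of_deriv_zero (t₀ := t₀) _ ht₀
    · simp only [hstr0]; module
    · intro t ht
      have h1 : HasDerivAt (fun s => d1 (η0 s)) (d1 ((2 : ℝ) • η1 t)) t :=
        d1.hasFDerivAt.comp_hasDerivAt t (hev0 t ht)
      have h2 := ((hev23 t ht).const_smul (2 : ℝ))
      have := h1.add h2
      convert this using 1
      · rfl
      simp [map_smul]
  have hstr0' : ∀ t ∈ Ioo tlo thi, d1 (η0 t) = (-2 : ℝ) • w11 (η2 t) (η3 t) := by
    intro t ht
    have h := hF t ht
    simp only at h
    have := eq_neg_of_add_eq_zero_left h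
    rw [this]; module
  -- Step 2: G(t) := d(η³∧η¹) − 3 η⁰∧(η¹∧η²) is constant, hence zero.
  have hG : ∀ t ∈ Ioo tlo thi,
      (fun s => d2 (w11 (η3 s) (η1 s))
        - (3 : ℝ) • w12 (η0 s) (w11 (η1 s) (η2 s))) t = 0 := by
    apply const_zero_of_deriv_zero (t₀ := t₀) _ ht₀
    · simp only [hstr31]; module
    · intro t ht
      have h1 : HasDerivAt (fun s => d2 (w11 (η3 s) (η1 s)))
          (d2 ((3 : ℝ) • w11 (η0 t) (η3 t) - d1 (η2 t))) t :=
        d2.hasFDerivAt.comp_hasDerivAt t (hev31 t ht)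
      have hc : HasDerivAt (fun s => w12 (η0 s)) (w12 ((2 : ℝ) • η1 t)) t :=
        w12.hasFDerivAt.comp_hasDerivAt t (hev0 t ht)
      have h2 : HasDerivAt (fun s => w12 (η0 s) (w11 (η1 s) (η2 s)))
          (w12 ((2 : ℝ) • η1 t) (w11 (η1 t) (η2 t))
            + w12 (η0 t) (-(3 : ℝ) • w11 (η0 t) (η2 t) - d1 (η3 t))) t :=
        hc.clm_apply (hev12 t ht)
      have := h1.sub (h2.const_smul (3 : ℝ))
      convert this using 1
      · rfl
      have e1 : w12 (η1 t) (w11 (η1 t) (η2 t)) = 0 := halt _ _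
      have e2 : w12 (η0 t) (w11 (η0 t) (η2 t)) = 0 := halt _ _
      have e3 : w12 (η3 t) (w11 (η2 t) (η3 t)) = 0 := by
        rw [hanti]; simp [halt]
      rw [map_sub, map_smul, hleib, hdd, hstr0' t ht]
      simp only [map_smul, map_sub, map_add, map_neg, e1, e2, e3,
        smul_zero, ContinuousLinearMap.zero_apply,
        ContinuousLinearMap.smul_apply, ContinuousLinearMap.map_smul]
      module
  -- Step 3: H(t) := d(η¹∧η²) + 3 η⁰∧(η³∧η¹) is constant, hence zero.
  have hH : ∀ t ∈ Ioo tlo thi,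
      (fun s => d2 (w11 (η1 s) (η2 s))
        + (3 : ℝ) • w12 (η0 s) (w11 (η3 s) (η1 s))) t = 0 := by
    apply const_zero_of_deriv_zero (t₀ := t₀) _ ht₀
    · simp only [hstr12]; module
    · intro t ht
      have h1 : HasDerivAt (fun s => d2 (w11 (η1 s) (η2 s)))
          (d2 (-(3 : ℝ) • w11 (η0 t) (η2 t) - d1 (η3 t))) t :=
        d2.hasFDerivAt.comp_hasDerivAt t (hev12 t ht)
      have hc : HasDerivAt (fun s => w12 (η0 s)) (w12 ((2 : ℝ) • η1 t)) t :=
        w12.hasFDerivAt.comp_hasDerivAt t (hev0 t ht)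
      have h2 : HasDerivAt (fun s => w12 (η0 s) (w11 (η3 s) (η1 s)))
          (w12 ((2 : ℝ) • η1 t) (w11 (η3 t) (η1 t))
            + w12 (η0 t) ((3 : ℝ) • w11 (η0 t) (η3 t) - d1 (η2 t))) t :=
        hc.clm_apply (hev31 t ht)
      have := h1.add (h2.const_smul (3 : ℝ))
      convert this using 1
      · rfl
      have e1 : w12 (η1 t) (w11 (η3 t) (η1 t)) = 0 := by
        rw [hanti]; simp [halt]
      have e2 : w12 (η0 t) (w11 (η0 t) (η3 t)) = 0 := halt _ _
      have e3 : w12 (η2 t) (w11 (η2 t) (η3 t)) = 0 := halt _ _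
      rw [map_sub, map_smul, hleib, hdd, hstr0' t ht]
      simp only [map_smul, map_sub, map_add, map_neg, e1, e2, e3,
        smul_zero, ContinuousLinearMap.zero_apply,
        ContinuousLinearMap.smul_apply, ContinuousLinearMap.map_smul]
      module
  intro t ht
  refine ⟨hstr0' t ht, ?_, ?_⟩
  · have h := hG t ht
    simp only at h
    rw [sub_eq_zero] at h
    exact h
  · have h := hH t ht
    simp only at h
    have := eq_neg_of_add_eq_zero_left h
    rw [this]; module
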